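/- There exists a real constant C such that for every natural number n ≥ 1, setting p = (2/(n√π)) · Γ((n+1)/2)/Γ(n/2) (which lies in (0,1)), the entropy of the geometric distribution with parameter p satisfies log₂(1/p) + ((1−p)/p) · log₂(1/(1−p)) ≤ (1/2)·log₂(n) + C. Consequently, taking n = 2d² − 1, the average number of bits of communication in the rejection-sampling protocol for simulating TBO correlations on a bipartite qudit pair of local dimension d is at most log₂(d) + O(1). -/

import Mathlib

open Real

/-- The acceptance probability of one round of the rejection-sampling protocol
on the unit sphere `S^n ⊆ ℝ^{n+1}`. -/
noncomputable def acceptProb (n : ℕ) : ℝ :=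
  2 / (n * Real.sqrt Real.pi) * (Real.Gamma ((n + 1 : ℝ) / 2) / Real.Gamma ((n : ℝ) / 2))

/-- The Shannon entropy (in bits) of the geometric distribution with parameter `p`,
i.e. the average number of bits needed to communicate the accepting iteration. -/
noncomputable def geomEntropy (p : ℝ) : ℝ :=
  Real.logb 2 (1 / p) + ((1 - p) / p) * Real.logb 2 (1 / (1 - p))

/-- Log-convexity of Gamma at the midpoint of `x` and `x + 1`. -/
lemma gamma_sq_le {x : ℝ} (hx : 0 < x) :
    Real.Gamma (x + 1/2) ^ 2 ≤ Real.Gamma x * Real.Gamma (x + 1) := by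
  have h := Real.convexOn_log_Gamma.2 (Set.mem_Ioi.2 hx)
    (Set.mem_Ioi.2 (by linarith : (0:ℝ) < x + 1))
    (by norm_num : (0:ℝ) ≤ 1/2) (by norm_num : (0:ℝ) ≤ 1/2) (by norm_num)
  simp only [Function.comp, smul_eq_mul] at h
  have h1 : (1/2 : ℝ) * x + 1/2 * (x+1) = x + 1/2 := by ring
  rw [h1] at h
  have hg1 := Real.Gamma_pos_of_pos hx
  have hg2 := Real.Gamma_pos_of_pos (by linarith : (0:ℝ) < x + 1)
  have h2 : Real.log (Real.Gamma (x+1/2) ^ 2) ≤ Real.log (Real.Gamma x * Real.Gamma (x+1)) := by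
    rw [Real.log_pow, Real.log_mul (ne_of_gt hg1) (ne_of_gt hg2)]
    push_cast
    linarith
  exact (Real.log_le_log_iff (by positivity) (by positivity)).1 h2

/-- Two-sided bounds on the acceptance probability. -/
lemma acceptProb_bounds (n : ℕ) (hn : 1 ≤ n) :
    0 < acceptProb n ∧ (acceptProb n)^2 ≤ 2 / (Real.pi * n) ∧
      1 / acceptProb n ≤ Real.sqrt (Real.pi * n) := by
  have hn1 : (1:ℝ) ≤ (n:ℝ) := by exact_mod_cast hn
  have hnpos : (0:ℝ) < n := by linarith
  have hx : (0:ℝ) < (n:ℝ)/2 := by positivity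
  have hg1 := Real.Gamma_pos_of_pos hx
  have hg2 := Real.Gamma_pos_of_pos (by linarith : (0:ℝ) < (n:ℝ)/2 + 1/2)
  have hA : Real.Gamma ((n:ℝ)/2 + 1/2) ^ 2 ≤ (n:ℝ)/2 * Real.Gamma ((n:ℝ)/2) ^ 2 := by
    have := gamma_sq_le hx
    rw [Real.Gamma_add_one (ne_of_gt hx)] at this
    nlinarith
  have hB : ((n:ℝ)/2)^2 * Real.Gamma ((n:ℝ)/2) ^ 2
      ≤ ((n:ℝ)/2 + 1/2) * Real.Gamma ((n:ℝ)/2 + 1/2) ^ 2 := by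
    have := gamma_sq_le (by linarith : (0:ℝ) < (n:ℝ)/2 + 1/2)
    have e1 : (n:ℝ)/2 + 1/2 + 1/2 = (n:ℝ)/2 + 1 := by ring
    rw [e1, Real.Gamma_add_one (ne_of_gt hx),
      Real.Gamma_add_one (by positivity : ((n:ℝ)/2 + 1/2) ≠ 0)] at this
    nlinarith
  set G1 := Real.Gamma ((n:ℝ)/2) with hG1
  set G2 := Real.Gamma ((n:ℝ)/2 + 1/2) with hG2
  have hpi := Real.pi_pos
  set s := Real.sqrt Real.pi with hs
  have hsq : s ^ 2 = Real.pi := Real.sq_sqrt (le_of_lt hpi)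
  have hspos : 0 < s := Real.sqrt_pos.2 hpi
  have hcast : ((n:ℝ) + 1) / 2 = (n:ℝ)/2 + 1/2 := by ring
  have hp : acceptProb n = 2 / (n * s) * (G2 / G1) := by
    rw [acceptProb, hcast]
  have hppos : 0 < acceptProb n := by rw [hp]; positivity
  have h2 : acceptProb n ^ 2 * ((n:ℝ)^2 * Real.pi * G1 ^ 2) = 4 * G2 ^ 2 := by
    rw [hp, ← hsq]; field_simp; ring
  refine ⟨hppos, ?_, ?_⟩
  · rw [le_div_iff₀ (by positivity)]
    nlinarith [h2, hA, mul_pos hnpos (pow_pos hg1 2)]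
  · rw [Real.le_sqrt (by positivity) (by positivity)]
    have h3 : (1 / acceptProb n) ^ 2 * (4 * G2 ^ 2) = (n:ℝ)^2 * Real.pi * G1 ^ 2 := by
      rw [div_pow, one_pow, div_mul_eq_mul_div, div_eq_iff (by positivity)]
      linear_combination -h2
    have hB' : (n:ℝ)^2 * G1^2 ≤ 4 * n * G2^2 := by
      nlinarith [hB, mul_nonneg (by linarith : (0:ℝ) ≤ (n:ℝ)-1) (sq_nonneg G2)]
    nlinarith [h3, mul_le_mul_of_nonneg_left hB' (le_of_lt hpi), pow_pos hg2 2]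

/-- The geometric entropy is at most `log₂(1/p)` plus `1/ln 2`. -/
lemma geomEntropy_le {p : ℝ} (hp0 : 0 < p) (hp1 : p < 1) :
    geomEntropy p ≤ Real.logb 2 (1 / p) + 1 / Real.log 2 := by
  have hl2 : 0 < Real.log 2 := Real.log_pos one_lt_two
  have h1p : (0:ℝ) < 1 - p := by linarith
  have hlog : Real.logb 2 (1 / (1 - p)) ≤ (p / (1 - p)) / Real.log 2 := by
    rw [Real.logb]
    apply (div_le_div_iff_of_pos_right hl2).2
    have := Real.log_le_sub_one_of_pos (show (0:ℝ) < 1/(1-p) by positivity)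
    have he : 1/(1-p) - 1 = p/(1-p) := by field_simp; ring
    linarith
  have hterm : ((1 - p) / p) * Real.logb 2 (1 / (1 - p)) ≤ 1 / Real.log 2 := by
    calc ((1 - p) / p) * Real.logb 2 (1 / (1 - p))
        ≤ ((1 - p) / p) * ((p / (1 - p)) / Real.log 2) :=
          mul_le_mul_of_nonneg_left hlog (by positivity)
      _ = 1 / Real.log 2 := by field_simp
  unfold geomEntropy
  linarith

/-- There is a constant `C` such that for all `n ≥ 1`, the average communication
of the rejection-sampling protocol on `S^n` is at most `(1/2) log₂ n + C`;
consequently, taking `n = 2d² - 1`, the average communication for simulating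
TBO correlations on a bipartite qudit pair of local dimension `d` is at most
`log₂ d + O(1)`. -/
theorem average_communication_bound :
    (∃ C : ℝ, ∀ n : ℕ, 1 ≤ n →
        0 < acceptProb n ∧ acceptProb n < 1 ∧
          geomEntropy (acceptProb n) ≤ (1 / 2) * Real.logb 2 n + C) ∧
      (∃ C : ℝ, ∀ d : ℕ, 1 ≤ d →
        geomEntropy (acceptProb (2 * d ^ 2 - 1)) ≤ Real.logb 2 d + C) := by
  have main1 : ∃ C : ℝ, ∀ n : ℕ, 1 ≤ n →
      0 < acceptProb n ∧ acceptProb n < 1 ∧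
        geomEntropy (acceptProb n) ≤ (1 / 2) * Real.logb 2 n + C := by
    refine ⟨(1/2) * Real.logb 2 Real.pi + 1 / Real.log 2, fun n hn => ?_⟩
    obtain ⟨hp0, hpsq, hinv⟩ := acceptProb_bounds n hn
    have hn1 : (1:ℝ) ≤ (n:ℝ) := by exact_mod_cast hn
    have hpi3 := Real.pi_gt_three
    have hp1 : acceptProb n < 1 := by
      by_contra h
      push_neg at h
      have h1 : (1:ℝ) ≤ acceptProb n ^ 2 := by nlinarith
      have h2 : 2 / (Real.pi * n) < 1 := by
        rw [div_lt_one (by positivity)]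
        nlinarith
      linarith
    refine ⟨hp0, hp1, ?_⟩
    have hstep := geomEntropy_le hp0 hp1
    have hmono : Real.logb 2 (1 / acceptProb n) ≤ Real.logb 2 (Real.sqrt (Real.pi * n)) :=
      (Real.logb_le_logb one_lt_two (by positivity) (by positivity)).2 hinv
    have hsqrt : Real.logb 2 (Real.sqrt (Real.pi * n))
        = (1/2) * Real.logb 2 (Real.pi * n) := by
      rw [Real.logb, Real.log_sqrt (by positivity), Real.logb]
      ring
    have hmul : Real.logb 2 (Real.pi * n) = Real.logb 2 Real.pi + Real.logb 2 n :=
      Real.logb_mul (by positivity) (by positivity)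
    rw [hsqrt, hmul] at hmono
    linarith
  refine ⟨main1, ?_⟩
  obtain ⟨C, hC⟩ := main1
  refine ⟨C + 1/2, fun d hd => ?_⟩
  have hd2 : 1 ≤ d ^ 2 := Nat.one_le_pow _ _ (by omega)
  have hn : 1 ≤ 2 * d ^ 2 - 1 := by omega
  obtain ⟨-, -, h⟩ := hC _ hn
  have hd1 : (1:ℝ) ≤ (d:ℝ) := by exact_mod_cast hd
  have hcast : ((2 * d ^ 2 - 1 : ℕ) : ℝ) = 2 * (d:ℝ)^2 - 1 := by
    have : (1:ℕ) ≤ 2 * d ^ 2 := by omega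
    push_cast [Nat.cast_sub this]
    ring
  have hle : Real.logb 2 ((2 * d ^ 2 - 1 : ℕ) : ℝ) ≤ Real.logb 2 (2 * (d:ℝ)^2) := by
    rw [hcast]
    apply (Real.logb_le_logb one_lt_two (by nlinarith) (by nlinarith)).2
    linarith
  have heq : Real.logb 2 (2 * (d:ℝ)^2) = 1 + 2 * Real.logb 2 d := by
    rw [Real.logb_mul (by norm_num) (by positivity), Real.logb_self_eq_one (by norm_num),
      show ((d:ℝ)^2) = (d:ℝ)^(2:ℕ) from rfl, Real.logb_pow]
    push_cast
    ring
  linarith [h, hle]
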